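/- For any word β = (i_1,…,i_r) in the index set I and any element v ≤ δ(β) of the Weyl group (Bruhat order), there exists a subsequence (i_{q_1},…,i_{q_m}) of β with m = ℓ(v) such that s_{i_{q_1}}⋯s_{i_{q_m}} = v is a reduced expression; moreover among all such subsequences there is a unique one whose index sequence (q_1,…,q_m) is maximal in left-to-right lexicographic order. -/

import Mathlib

open CoxeterSystem

variable {B : Type*} {W : Type*} [Group W] {M : CoxeterMatrix B}

/-- Bruhat order on a Coxeter group: `u ≤ w` iff `u` is the product of a subword of
some reduced word for `w`. -/
def BruhatLE (cs : CoxeterSystem M W) (u w : W) : Prop :=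
  ∃ l : List B, cs.IsReduced l ∧ w = cs.wordProd l ∧
    ∃ l' : List B, l'.Sublist l ∧ u = cs.wordProd l'

/-- The Demazure product of a word, via the (equivalent) length-based recursion
`δ([]) = 1`, `δ(i :: b) = s_i δ(b)` if this increases length, and `δ(b)` otherwise. -/
noncomputable def demazure (cs : CoxeterSystem M W) : List B → W
  | [] => 1
  | i :: b =>
    if cs.length (demazure cs b) < cs.length (cs.simple i * demazure cs b) then
      cs.simple i * demazure cs b
    else demazure cs b

section Aux

set_option linter.unusedSectionVars false
set_option maxHeartbeats 1600000

open List

namespace SubwordAux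

variable {B : Type*} {W : Type*} [Group W] [DecidableEq W] {M : CoxeterMatrix B}
  (cs : CoxeterSystem M W)

local prefix:100 "σ" => cs.simple
local prefix:100 "π" => cs.wordProd
local prefix:100 "ℒ" => cs.length

/-- The sign-flipping involution used for the reflection representation. -/
def rs (i : B) : W × ℤˣ → W × ℤˣ :=
  fun p => (σ i * p.1 * σ i, if p.1 = σ i then -p.2 else p.2)

lemma simple_conj_simple (i : B) (t : W) : σ i * (σ i * t * σ i) * σ i = t := by
  have h1 := cs.simple_mul_simple_self i
  calc σ i * (σ i * t * σ i) * σ i = (σ i * σ i) * t * (σ i * σ i) := by group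
  _ = t := by rw [h1]; group

lemma rs_invol (i : B) : Function.Involutive (rs cs i) := by
  rintro ⟨t, e⟩
  simp only [rs]
  by_cases h : t = σ i
  · subst h
    have h1 : σ i * σ i * σ i = σ i := by rw [cs.simple_mul_simple_self]; group
    simp [h1, cs.simple_mul_simple_self]
  · have h2 : ¬ (σ i * t * σ i = σ i) := by
      intro hh
      apply h
      have h3 := congrArg (fun x => σ i * x * σ i) hh
      rw [simple_conj_simple] at h3
      rw [h3, cs.simple_mul_simple_self, one_mul]
    rw [if_neg h]
    simp [h2, simple_conj_simple]

/-- The permutation given by `rs`. -/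
def rp (i : B) : Equiv.Perm (W × ℤˣ) := (rs_invol cs i).toPerm

lemma rp_apply (i : B) (p : W × ℤˣ) : rp cs i p = rs cs i p := rfl

lemma rightInvSeq_cons (a : B) (ω : List B) :
    cs.rightInvSeq (a :: ω) = ((π ω)⁻¹ * (σ a) * (π ω)) :: cs.rightInvSeq ω := rfl

lemma prod_rp_apply (ω : List B) (t : W) (e : ℤˣ) :
    ((ω.map (rp cs)).prod : Equiv.Perm (W × ℤˣ)) (t, e) =
      (π ω * t * (π ω)⁻¹, (-1 : ℤˣ)^((cs.rightInvSeq ω).count t) * e) := by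
  induction ω with
  | nil => simp
  | cons a ω ih =>
    rw [map_cons, prod_cons, Equiv.Perm.mul_apply, ih, rp_apply, rightInvSeq_cons,
      wordProd_cons]
    simp only [rs, List.count_cons, beq_iff_eq]
    have hinv : (σ a * π ω)⁻¹ = (π ω)⁻¹ * σ a := by rw [mul_inv_rev, cs.inv_simple]
    by_cases h : π ω * t * (π ω)⁻¹ = σ a
    · have h' : (π ω)⁻¹ * σ a * π ω = t := by rw [← h]; group
      rw [if_pos h, if_pos h', Prod.mk.injEq]
      constructor
      · rw [hinv, ← h]; group
      · rw [pow_succ', mul_assoc, neg_one_mul]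
    · have h' : ¬ ((π ω)⁻¹ * σ a * π ω = t) := by
        intro hh
        apply h
        rw [← hh]; group
      rw [if_neg h, if_neg h', Prod.mk.injEq]
      constructor
      · rw [hinv]; group
      · rw [add_zero]

lemma alt_prod_pow {G : Type*} [Monoid G] (f : B → G) (i j : B) (m : ℕ) :
    ((alternatingWord i j (2 * m)).map f).prod = (f i * f j) ^ m := by
  induction m with
  | zero => simp [alternatingWord]
  | succ m ih =>
    have : alternatingWord i j (2 * (m + 1)) = i :: j :: alternatingWord i j (2 * m) := by
      have h1 : 2 * (m + 1) = (2 * m + 1) + 1 := by ring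
      rw [h1, alternatingWord_succ', alternatingWord_succ']
      simp [Nat.even_add_one, Nat.even_mul]
    rw [this, map_cons, map_cons, prod_cons, prod_cons, ih, pow_succ']
    rw [mul_assoc]

/-- Entries of the right inversion sequence of alternating words. -/
def Talt (i j : B) (d : ℕ) : W :=
  (π (alternatingWord i j d))⁻¹ * (if Even d then σ j else σ i) * π (alternatingWord i j d)

lemma ris_alternatingWord (i j : B) (N : ℕ) :
    cs.rightInvSeq (alternatingWord i j N) = ((List.range N).reverse).map (Talt cs i j) := by
  induction N with
  | zero => simp [alternatingWord]
  | succ N ih =>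
    rw [alternatingWord_succ', rightInvSeq_cons, ih]
    have : (List.range (N + 1)).reverse = N :: (List.range N).reverse := by
      rw [List.range_succ, reverse_append]; simp
    rw [this, map_cons]
    congr 1
    simp only [Talt, apply_ite cs.simple]

lemma qp_base (i j : B) : σ j * (σ i * σ j) = (σ i * σ j)⁻¹ * σ j := by
  rw [mul_inv_rev, cs.inv_simple, cs.inv_simple, mul_assoc]

lemma sj_pow_comm (i j : B) (k : ℕ) :
    σ j * (σ i * σ j) ^ k = ((σ i * σ j) ^ k)⁻¹ * σ j := by
  induction k with
  | zero => simp
  | succ k ih =>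
    rw [pow_succ, ← mul_assoc, ih, mul_assoc, qp_base, ← mul_assoc, ← mul_inv_rev, ← pow_succ', ← pow_succ]

lemma conj_helper (p q : W) (hq : q * q = 1) (hcomm : ∀ n : ℕ, q * p ^ n = (p ^ n)⁻¹ * q)
    (k : ℕ) : (q * p ^ k)⁻¹ * (p * q) * (q * p ^ k) = (p ^ (2 * k + 1))⁻¹ * q := by
  have hq1 : ∀ x : W, q * (q * x) = x := fun x => by rw [← mul_assoc, hq, one_mul]
  have hqi : q⁻¹ = q := by
    calc q⁻¹ = q⁻¹ * (q * q) := by rw [hq, mul_one]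
    _ = q := by rw [← mul_assoc, inv_mul_cancel, one_mul]
  calc (q * p ^ k)⁻¹ * (p * q) * (q * p ^ k)
      = (p ^ k)⁻¹ * (q * (p * (q * (q * p ^ k)))) := by rw [mul_inv_rev, hqi]; group
    _ = (p ^ k)⁻¹ * (q * (p * p ^ k)) := by rw [hq1]
    _ = (p ^ k)⁻¹ * (q * p ^ (k + 1)) := by rw [← pow_succ']
    _ = (p ^ k)⁻¹ * ((p ^ (k + 1))⁻¹ * q) := by rw [hcomm]
    _ = ((p ^ (k + 1)) * (p ^ k))⁻¹ * q := by rw [mul_inv_rev]; group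
    _ = (p ^ (2 * k + 1))⁻¹ * q := by rw [← pow_add, show k + 1 + k = 2 * k + 1 by omega]

lemma Talt_eq (i j : B) (d : ℕ) : Talt cs i j d = ((σ i * σ j) ^ d)⁻¹ * σ j := by
  have hq : σ j * σ j = 1 := cs.simple_mul_simple_self j
  rw [Talt, cs.prod_alternatingWord_eq_mul_pow]
  rcases Nat.even_or_odd d with h | h
  · obtain ⟨k, hk⟩ := h
    have hd2 : d / 2 = k := by omega
    rw [if_pos ⟨k, hk⟩, if_pos ⟨k, hk⟩, hd2, one_mul]
    rw [mul_assoc, sj_pow_comm, ← mul_assoc, ← mul_inv_rev, ← pow_add,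
      show k + k = d by omega]
  · have h' : ¬ Even d := Nat.not_even_iff_odd.mpr h
    obtain ⟨k, hk⟩ := h
    have hd2 : d / 2 = k := by omega
    rw [if_neg h', if_neg h', hd2]
    have hpq : (σ i * σ j) * σ j = σ i := by rw [mul_assoc, hq, mul_one]
    have key := conj_helper (σ i * σ j) (σ j) hq (sj_pow_comm cs i j) k
    rw [hpq, show 2 * k + 1 = d by omega] at key
    exact key

lemma Talt_period (i j : B) (d : ℕ) : Talt cs i j (d + M i j) = Talt cs i j d := by
  rw [Talt_eq, Talt_eq, pow_add, cs.simple_mul_simple_pow, mul_one]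

end SubwordAux

namespace SubwordAux

variable {B : Type*} {W : Type*} [Group W] [DecidableEq W] {M : CoxeterMatrix B}
  (cs : CoxeterSystem M W)

local prefix:100 "σ" => cs.simple
local prefix:100 "π" => cs.wordProd
local prefix:100 "ℒ" => cs.length

lemma rp_liftable : M.IsLiftable (rp cs) := by
  intro i j
  rw [← alt_prod_pow (rp cs) i j (M i j)]
  apply Equiv.ext
  rintro ⟨t, e⟩
  rw [prod_rp_apply]
  have hπ : π (alternatingWord i j (2 * M i j)) = 1 := by
    rw [cs.prod_alternatingWord_eq_mul_pow, if_pos ⟨M i j, by ring⟩,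
      Nat.mul_div_cancel_left _ (by norm_num : 0 < 2), cs.simple_mul_simple_pow, one_mul]
  have hcount : Even ((cs.rightInvSeq (alternatingWord i j (2 * M i j))).count t) := by
    rw [ris_alternatingWord, map_reverse, count_reverse, two_mul, List.range_add,
      map_append, count_append]
    have hmap : ((List.range (M i j)).map (fun x => M i j + x)).map (Talt cs i j) =
        (List.range (M i j)).map (Talt cs i j) := by
      rw [map_map]
      apply List.map_congr_left
      intro d _
      show Talt cs i j (M i j + d) = Talt cs i j d
      rw [add_comm]
      exact Talt_period cs i j d
    rw [hmap]
    exact ⟨_, rfl⟩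
  rw [hπ]
  simp [hcount.neg_one_pow]

noncomputable def rrho : W →* Equiv.Perm (W × ℤˣ) := cs.lift ⟨rp cs, rp_liftable cs⟩

lemma rrho_wordProd (ω : List B) : rrho cs (π ω) = (ω.map (rp cs)).prod := by
  induction ω with
  | nil => simp [rrho]
  | cons a ω ih =>
    rw [wordProd_cons, map_mul, ih, map_cons, prod_cons]
    congr 1
    exact cs.lift_apply_simple (rp_liftable cs) a

lemma count_parity (ω ω' : List B) (h : π ω = π ω') (t : W) :
    (-1 : ℤˣ)^((cs.rightInvSeq ω).count t) = (-1 : ℤˣ)^((cs.rightInvSeq ω').count t) := by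
  have h1 := prod_rp_apply cs ω t 1
  have h2 := prod_rp_apply cs ω' t 1
  rw [← rrho_wordProd] at h1 h2
  rw [h] at h1
  rw [h1] at h2
  have := congrArg Prod.snd h2
  simpa using this

lemma rightInvSeq_append (l1 l2 : List B) :
    cs.rightInvSeq (l1 ++ l2) =
      (cs.rightInvSeq l1).map (fun x => (π l2)⁻¹ * x * π l2) ++ cs.rightInvSeq l2 := by
  induction l1 with
  | nil => simp
  | cons a l1 ih =>
    rw [cons_append, rightInvSeq_cons, rightInvSeq_cons, ih, map_cons, cons_append]
    congr 1
    rw [wordProd_append, mul_inv_rev]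
    group

lemma leftInvSeq_eq_map (ω : List B) :
    cs.leftInvSeq ω = (cs.rightInvSeq ω).map (fun x => (π ω) * x * (π ω)⁻¹) := by
  induction ω with
  | nil => simp
  | cons a ω ih =>
    have hlis : cs.leftInvSeq (a :: ω) = σ a :: (cs.leftInvSeq ω).map (MulAut.conj (σ a)) := rfl
    rw [hlis, ih, map_map, rightInvSeq_cons, map_cons]
    congr 1
    · have h3 : π (a :: ω) * ((π ω)⁻¹ * σ a * π ω) * (π (a :: ω))⁻¹ = σ a * σ a * σ a := by
        rw [wordProd_cons, mul_inv_rev, cs.inv_simple]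
        group
      rw [h3, cs.simple_mul_simple_self, one_mul]
    · apply List.map_congr_left
      intro x _
      show MulAut.conj (σ a) (π ω * x * (π ω)⁻¹) = π (a :: ω) * x * (π (a :: ω))⁻¹
      rw [MulAut.conj_apply, wordProd_cons, mul_inv_rev, cs.inv_simple]
      group

lemma conj_injective (g : W) : Function.Injective (fun x : W => g⁻¹ * x * g) := by
  intro x y h
  have h2 : ∀ z : W, g * (g⁻¹ * z * g) * g⁻¹ = z := by intro z; group
  dsimp only at h
  have h1 : g * (g⁻¹ * x * g) * g⁻¹ = g * (g⁻¹ * y * g) * g⁻¹ := by rw [h]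
  rwa [h2, h2] at h1

lemma conj_injective' (g : W) : Function.Injective (fun x : W => g * x * g⁻¹) := by
  intro x y h
  have h2 : ∀ z : W, g⁻¹ * (g * z * g⁻¹) * g = z := by intro z; group
  dsimp only at h
  have h1 : g⁻¹ * (g * x * g⁻¹) * g = g⁻¹ * (g * y * g⁻¹) * g := by rw [h]
  rwa [h2, h2] at h1

lemma mem_rightInvSeq_of_inversion (ω : List B) {t : W} (ht : cs.IsReflection t)
    (hl : ℒ (π ω * t) < ℒ (π ω)) : t ∈ cs.rightInvSeq ω := by
  obtain ⟨q, i, hqi⟩ := ht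
  obtain ⟨r, hr⟩ := cs.wordProd_surjective q
  obtain ⟨υ, hυred, hυ⟩ := cs.exists_reduced_word' (π ω * t)
  have htr : cs.IsReflection t := ⟨q, i, hqi⟩
  set c : List B := (r.concat i) ++ r.reverse with hc
  have hπc : π c = t := by
    rw [hc, wordProd_append, wordProd_concat, wordProd_reverse, hqi, hr, mul_assoc]
  have hω' : π (υ ++ c) = π ω := by
    rw [wordProd_append, hπc, ← hυ, mul_assoc, htr.mul_self, mul_one]
  -- compute count of t in ris (υ ++ c)
  have hcount1 : ((cs.rightInvSeq υ).map (fun x => (π c)⁻¹ * x * π c)).count t = 0 := by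
    have ht' : t = (fun x : W => (π c)⁻¹ * x * π c) t := by
      show t = (π c)⁻¹ * t * π c
      rw [hπc, inv_mul_cancel, one_mul]
    rw [ht', count_map_of_injective _ _ (conj_injective (π c))]
    rw [count_eq_zero]
    intro hmem
    have hinv := cs.isRightInversion_of_mem_rightInvSeq hυred hmem
    rw [← hυ] at hinv
    have : ℒ (π ω * t * t) < ℒ (π ω * t) := hinv.2
    rw [mul_assoc, htr.mul_self, mul_one] at this
    omega
  have hconc : ∀ (l : List B) (x : B), cs.rightInvSeq (l.concat x) =
      ((cs.rightInvSeq l).map (MulAut.conj (σ x))).concat (σ x) := cs.rightInvSeq_concat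
  have hcount2 : (cs.rightInvSeq c).count t = 2 * ((cs.rightInvSeq r).count (σ i)) + 1 := by
    rw [hc, rightInvSeq_append, count_append]
    have hrev : π r.reverse = q⁻¹ := by rw [wordProd_reverse, hr]
    have hA : ((cs.rightInvSeq (r.concat i)).map
        (fun x => (π r.reverse)⁻¹ * x * π r.reverse)).count t
        = (cs.rightInvSeq r).count (σ i) + 1 := by
      have ht' : t = (fun x : W => (π r.reverse)⁻¹ * x * π r.reverse) (σ i) := by
        show t = (π r.reverse)⁻¹ * σ i * π r.reverse
        rw [hrev, inv_inv]
        exact hqi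
      rw [ht', count_map_of_injective _ _ (conj_injective (π r.reverse))]
      rw [hconc, concat_eq_append, count_append]
      have hB : ((cs.rightInvSeq r).map (MulAut.conj (σ i))).count (σ i)
          = (cs.rightInvSeq r).count (σ i) := by
        have hinj2 : Function.Injective (MulAut.conj (σ i) : W → W) :=
          (MulAut.conj (σ i)).injective
        have hcnt := count_map_of_injective (cs.rightInvSeq r) (⇑(MulAut.conj (σ i))) hinj2 (σ i)
        rw [show (MulAut.conj (σ i)) (σ i) = σ i from by
          rw [MulAut.conj_apply, cs.inv_simple, mul_assoc, cs.simple_mul_simple_self,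
            mul_one]] at hcnt
        exact hcnt
      rw [hB]
      simp
    have hBpart : (cs.rightInvSeq r.reverse).count t = (cs.rightInvSeq r).count (σ i) := by
      rw [cs.rightInvSeq_reverse, count_reverse, leftInvSeq_eq_map]
      have ht' : t = (fun x : W => (π r) * x * (π r)⁻¹) (σ i) := by
        show t = π r * σ i * (π r)⁻¹
        rw [hr]
        exact hqi
      rw [ht', count_map_of_injective _ _ (conj_injective' (π r))]
    rw [hA, hBpart]
    ring
  have hodd : Odd ((cs.rightInvSeq (υ ++ c)).count t) := by
    rw [rightInvSeq_append, count_append, hcount1, hcount2]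
    exact ⟨(cs.rightInvSeq r).count (σ i), by ring⟩
  have hpar := count_parity cs ω (υ ++ c) hω'.symm t
  by_contra hmem
  rw [(count_eq_zero).mpr hmem, pow_zero, hodd.neg_one_pow] at hpar
  exact (by decide : ¬ ((1 : ℤˣ) = -1)) hpar

lemma exch_right (ω : List B) {t : W} (ht : cs.IsReflection t)
    (hl : ℒ (π ω * t) < ℒ (π ω)) : ∃ j < ω.length, π (ω.eraseIdx j) = π ω * t := by
  have hmem := mem_rightInvSeq_of_inversion cs ω ht hl
  obtain ⟨j, hj, hget⟩ := List.getElem_of_mem hmem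
  have hj' : j < ω.length := by simpa using hj
  refine ⟨j, hj', ?_⟩
  rw [← cs.wordProd_mul_getD_rightInvSeq ω j]
  congr 1
  rw [getD_eq_getElem _ _ hj, hget]

lemma exch_left (ω : List B) (i : B) (hl : ℒ (σ i * π ω) < ℒ (π ω)) :
    ∃ j < ω.length, π (ω.eraseIdx j) = σ i * π ω := by
  have hinv : (π ω)⁻¹ * σ i = (σ i * π ω)⁻¹ := by rw [mul_inv_rev, cs.inv_simple]
  have h1 : ℒ (π ω.reverse * σ i) < ℒ (π ω.reverse) := by
    rw [wordProd_reverse, hinv, cs.length_inv, cs.length_inv]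
    exact hl
  have hmem := mem_rightInvSeq_of_inversion cs ω.reverse (cs.isReflection_simple i) h1
  rw [cs.rightInvSeq_reverse, mem_reverse] at hmem
  obtain ⟨j, hj, hget⟩ := List.getElem_of_mem hmem
  have hj' : j < ω.length := by simpa using hj
  refine ⟨j, hj', ?_⟩
  rw [← cs.getD_leftInvSeq_mul_wordProd ω j]
  congr 1
  rw [getD_eq_getElem _ _ hj, hget]

end SubwordAux

namespace SubwordAux

variable {B : Type*} {W : Type*} [Group W] [DecidableEq W] {M : CoxeterMatrix B}
  (cs : CoxeterSystem M W)

local prefix:100 "σ" => cs.simple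
local prefix:100 "π" => cs.wordProd
local prefix:100 "ℒ" => cs.length

/-- simple multiplication changes length by exactly one, as a trichotomy-free fact -/
lemma simple_mul_lt_or_gt (u : W) (i : B) :
    ℒ (σ i * u) + 1 = ℒ u ∨ ℒ (σ i * u) = ℒ u + 1 :=
  (cs.length_simple_mul u i).symm.imp (fun h => h) (fun h => h)

/-- One-step Bruhat relation: `w' = w * t` for a reflection, with smaller length. -/
def bstep (w' w : W) : Prop :=
  (∃ t, cs.IsReflection t ∧ w' = w * t) ∧ ℒ w' < ℒ w

/-- Chain Bruhat order. -/
def ble : W → W → Prop := Relation.ReflTransGen (bstep cs)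

lemma bstep_simple_left {w : W} (i : B) (h : ℒ (σ i * w) < ℒ w) : bstep cs (σ i * w) w := by
  refine ⟨⟨w⁻¹ * σ i * w, ?_, by group⟩, h⟩
  have := (cs.isReflection_simple i).conj w⁻¹
  rwa [inv_inv] at this

/-- Every word has a reduced sublist with the same product. -/
lemma exists_reduced_sublist (ω : List B) :
    ∃ υ, υ.Sublist ω ∧ cs.IsReduced υ ∧ π υ = π ω := by
  induction ω with
  | nil =>
    refine ⟨[], Sublist.refl _, ?_, rfl⟩
    show ℒ (π ([] : List B)) = ([] : List B).length
    simp
  | cons a ω₁ ih =>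
    obtain ⟨υ₁, hsub, hred, hp⟩ := ih
    rcases simple_mul_lt_or_gt cs (π υ₁) a with h | h
    · -- descent: delete a letter from υ₁
      have hlt : ℒ (σ a * π υ₁) < ℒ (π υ₁) := by omega
      obtain ⟨j, hj, hpe⟩ := exch_left cs υ₁ a hlt
      refine ⟨υ₁.eraseIdx j, ?_, ?_, ?_⟩
      · exact ((υ₁.eraseIdx_sublist j).trans hsub).trans (sublist_cons_self a ω₁)
      · show ℒ (π (υ₁.eraseIdx j)) = (υ₁.eraseIdx j).length
        rw [hpe, length_eraseIdx, if_pos hj]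
        have : ℒ (π υ₁) = υ₁.length := hred
        omega
      · rw [hpe, hp, wordProd_cons]
    · -- ascent: prepend a
      refine ⟨a :: υ₁, hsub.cons₂ a, ?_, ?_⟩
      · show ℒ (π (a :: υ₁)) = (a :: υ₁).length
        rw [wordProd_cons, h]
        have : ℒ (π υ₁) = υ₁.length := hred
        simp [this]
      · rw [wordProd_cons, wordProd_cons, hp]

/-- Going down in the chain order can be realized inside any word. -/
lemma descend {u w : W} (h : ble cs u w) :
    ∀ ω : List B, π ω = w → ∃ υ, υ.Sublist ω ∧ cs.IsReduced υ ∧ π υ = u := by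
  induction h with
  | refl =>
    intro ω hw
    obtain ⟨υ, h1, h2, h3⟩ := exists_reduced_sublist cs ω
    exact ⟨υ, h1, h2, by rw [h3, hw]⟩
  | tail _ hbc ih =>
    rename_i b c _
    intro ω hw
    obtain ⟨⟨t, htrefl, hbt⟩, hlen⟩ := hbc
    have hlt : ℒ (π ω * t) < ℒ (π ω) := by rw [hw, ← hbt]; exact hlen
    obtain ⟨j, hj, hpe⟩ := exch_right cs ω htrefl hlt
    have hb : π (ω.eraseIdx j) = b := by rw [hpe, hw, ← hbt]
    obtain ⟨υ, h1, h2, h3⟩ := ih (ω.eraseIdx j) hb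
    exact ⟨υ, h1.trans (ω.eraseIdx_sublist j), h2, h3⟩

end SubwordAux

namespace SubwordAux

variable {B : Type*} {W : Type*} [Group W] [DecidableEq W] {M : CoxeterMatrix B}
  (cs : CoxeterSystem M W)

local prefix:100 "σ" => cs.simple
local prefix:100 "π" => cs.wordProd
local prefix:100 "ℒ" => cs.length

lemma A1 {w w' : W} (c : B) (hstep : bstep cs w' w)
    (h1 : ℒ w' < ℒ (σ c * w')) (h2 : ℒ (σ c * w) < ℒ w) : ble cs (σ c * w') w := by
  obtain ⟨m, hmred, hm⟩ := cs.exists_reduced_word' (σ c * w)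
  have hwm : π (c :: m) = w := by
    rw [wordProd_cons, ← hm, ← mul_assoc, cs.simple_mul_simple_self, one_mul]
  obtain ⟨⟨t, ht, hwt⟩, hlen⟩ := hstep
  have hlt : ℒ (π (c :: m) * t) < ℒ (π (c :: m)) := by rw [hwm, ← hwt]; exact hlen
  obtain ⟨j, hj, hpe⟩ := exch_right cs (c :: m) ht hlt
  rw [hwm, ← hwt] at hpe
  rcases j with _ | j'
  · -- j = 0 : σ c * w' = w
    have hpm : π m = w' := hpe
    have hgoal : σ c * w' = w := by
      rw [← hpm, ← hm, ← mul_assoc, cs.simple_mul_simple_self, one_mul]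
    rw [hgoal]
    exact Relation.ReflTransGen.refl
  · have hpe' : π (c :: m.eraseIdx j') = w' := hpe
    have hx : σ c * w' = π (m.eraseIdx j') := by
      rw [← hpe', wordProd_cons, ← mul_assoc, cs.simple_mul_simple_self, one_mul]
    have hj'' : j' < m.length := by simpa using hj
    have hx2 : π (m.eraseIdx j') = π m * ((cs.rightInvSeq m).getD j' 1) :=
      (cs.wordProd_mul_getD_rightInvSeq m j').symm
    have ht''refl : cs.IsReflection ((cs.rightInvSeq m).getD j' 1) := by
      apply cs.isReflection_of_mem_rightInvSeq
      rw [getD_eq_getElem _ _ (by rw [cs.length_rightInvSeq]; exact hj'')]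
      exact List.getElem_mem _
    have hlen2 : ℒ (π (m.eraseIdx j')) < ℒ (π m) := by
      calc ℒ (π (m.eraseIdx j')) ≤ (m.eraseIdx j').length := cs.length_wordProd_le _
      _ < m.length := by rw [length_eraseIdx, if_pos hj'']; omega
      _ = ℒ (π m) := hmred.symm
    have hstep1 : bstep cs (π (m.eraseIdx j')) (π m) :=
      ⟨⟨(cs.rightInvSeq m).getD j' 1, ht''refl, hx2⟩, hlen2⟩
    have hstep2 : bstep cs (π m) w := by
      have := bstep_simple_left cs c h2
      rwa [hm] at this
    rw [hx]
    exact (Relation.ReflTransGen.single hstep1).tail hstep2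

lemma YZ (n : ℕ) (c : B) : ∀ u w : W, ℒ w ≤ n → ble cs u w → ℒ u < ℒ (σ c * u) →
    (ℒ w < ℒ (σ c * w) → ble cs (σ c * u) (σ c * w)) ∧
    (ℒ (σ c * w) < ℒ w → ble cs (σ c * u) w) := by
  induction n using Nat.strong_induction_on with
  | _ n ih =>
    intro u w hwn hle hu
    constructor
    · intro hcw
      rcases Relation.ReflTransGen.cases_tail hle with heq | ⟨w', hle', hstep⟩
      · rw [heq]
        exact Relation.ReflTransGen.refl
      · have hlw' : ℒ w' < ℒ w := hstep.2
        rcases simple_mul_lt_or_gt cs w' c with hdesc | hasc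
        · have hY := (ih (ℒ w') (by omega) u w' le_rfl hle' hu).2 (by omega)
          have hstep3 : bstep cs w (σ c * w) := by
            refine ⟨⟨(σ c * w)⁻¹ * σ c * (σ c * w), ?_, ?_⟩, hcw⟩
            · have := (cs.isReflection_simple c).conj (σ c * w)⁻¹
              rwa [inv_inv] at this
            · rw [show (σ c * w) * ((σ c * w)⁻¹ * σ c * (σ c * w)) = σ c * (σ c * w) from by
                group, ← mul_assoc, cs.simple_mul_simple_self, one_mul]
          exact (hY.tail hstep).tail hstep3
        · have hZ := (ih (ℒ w') (by omega) u w' le_rfl hle' hu).1 (by omega)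
          obtain ⟨⟨t, ht, hwt⟩, _⟩ := hstep
          have hstep4 : bstep cs (σ c * w') (σ c * w) := by
            refine ⟨⟨t, ht, by rw [hwt]; group⟩, by omega⟩
          exact hZ.tail hstep4
    · intro hcw
      rcases Relation.ReflTransGen.cases_tail hle with heq | ⟨w', hle', hstep⟩
      · exfalso
        rw [heq] at hcw
        omega
      · have hlw' : ℒ w' < ℒ w := hstep.2
        rcases simple_mul_lt_or_gt cs w' c with hdesc | hasc
        · have hY := (ih (ℒ w') (by omega) u w' le_rfl hle' hu).2 (by omega)
          exact hY.tail hstep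
        · have hZ := (ih (ℒ w') (by omega) u w' le_rfl hle' hu).1 (by omega)
          have hA := A1 cs c hstep (by omega) hcw
          exact hZ.trans hA

lemma ble_of_sublist : ∀ l : List B, cs.IsReduced l → ∀ l'', l''.Sublist l →
    ble cs (π l'') (π l) := by
  intro l
  induction l with
  | nil =>
    intro _ l'' h
    rw [sublist_nil.mp h]
    exact Relation.ReflTransGen.refl
  | cons cHead l₁ ih =>
    intro hred l'' hsub
    have hl₁red : cs.IsReduced l₁ := by
      have := CoxeterSystem.IsReduced.drop hred 1
      simpa using this
    have hlenTop : ℒ (π (cHead :: l₁)) = ℒ (π l₁) + 1 := by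
      have hr1 : ℒ (π (cHead :: l₁)) = (cHead :: l₁).length := hred
      have hr2 : ℒ (π l₁) = l₁.length := hl₁red
      rw [hr1, hr2, length_cons]
    have hlenTop' : ℒ (σ cHead * π l₁) = ℒ (π l₁) + 1 := by
      rw [← wordProd_cons]
      omega
    have hstepTop : bstep cs (π l₁) (π (cHead :: l₁)) := by
      refine ⟨⟨(π (cHead :: l₁))⁻¹ * σ cHead * π (cHead :: l₁), ?_, ?_⟩, by omega⟩
      · have := (cs.isReflection_simple cHead).conj (π (cHead :: l₁))⁻¹
        rwa [inv_inv] at this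
      · rw [show π (cHead :: l₁) * ((π (cHead :: l₁))⁻¹ * σ cHead * π (cHead :: l₁))
              = σ cHead * π (cHead :: l₁) from by group,
          wordProd_cons, ← mul_assoc, cs.simple_mul_simple_self, one_mul]
    cases hsub with
    | cons _ h =>
      exact (ih hl₁red l'' h).tail hstepTop
    | cons_cons _ h =>
      rename_i k
      have hble := ih hl₁red k h
      rcases simple_mul_lt_or_gt cs (π k) cHead with hdesc | hasc
      · have hstep0 : bstep cs (π (cHead :: k)) (π k) := by
          rw [wordProd_cons]
          exact bstep_simple_left cs cHead (by omega)
        exact ((Relation.ReflTransGen.single hstep0).trans hble).tail hstepTop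
      · have hZ := (YZ cs (ℒ (π l₁)) cHead (π k) (π l₁) le_rfl hble (by omega)).1 (by omega)
        rw [wordProd_cons, wordProd_cons]
        exact hZ

end SubwordAux


section Final

open List SubwordAux

variable {B : Type*} {W : Type*} [Group W] {M : CoxeterMatrix B}

lemma demAux_reduced_word [DecidableEq W] (cs : CoxeterSystem M W) (l : List B) :
    ∃ υ, υ.Sublist l ∧ cs.IsReduced υ ∧ cs.wordProd υ = demazure cs l := by
  induction l with
  | nil =>
    refine ⟨[], Sublist.refl _, ?_, ?_⟩
    · show cs.length (cs.wordProd ([] : List B)) = ([] : List B).length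
      simp
    · rw [demazure]
      simp
  | cons i b ih =>
    obtain ⟨υ, hsub, hred, hp⟩ := ih
    rw [show demazure cs (i :: b) = if cs.length (demazure cs b) <
        cs.length (cs.simple i * demazure cs b) then cs.simple i * demazure cs b
        else demazure cs b from by rw [demazure]]
    split_ifs with h
    · refine ⟨i :: υ, hsub.cons₂ i, ?_, ?_⟩
      · show cs.length (cs.wordProd (i :: υ)) = (i :: υ).length
        rw [wordProd_cons, hp]
        have hasc : cs.length (cs.simple i * demazure cs b) =
            cs.length (demazure cs b) + 1 := by
          rcases simple_mul_lt_or_gt cs (demazure cs b) i with h' | h' <;> omega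
        have h2 : cs.length (cs.wordProd υ) = υ.length := hred
        rw [hp] at h2
        rw [hasc, length_cons]
        omega
      · rw [wordProd_cons, hp]
    · exact ⟨υ, hsub.trans (sublist_cons_self i b), hred, hp⟩

lemma exists_reduced_subword [DecidableEq W] (cs : CoxeterSystem M W) (β : List B) (v : W)
    (hv : BruhatLE cs v (demazure cs β)) :
    ∃ υ, υ.Sublist β ∧ cs.IsReduced υ ∧ cs.wordProd υ = v := by
  obtain ⟨l, hlred, hld, l', hl', hvl'⟩ := hv
  have hble : ble cs v (demazure cs β) := by
    rw [hvl', hld]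
    exact ble_of_sublist cs l hlred l' hl'
  obtain ⟨υs, h1, h2, h3⟩ := demAux_reduced_word cs β
  obtain ⟨υ, g1, g2, g3⟩ := descend cs hble υs h3
  exact ⟨υ, g1.trans h1, g2, g3⟩

lemma finset_max_rel {α : Type*} (r : α → α → Prop) [IsTrans α r] [IsTrichotomous α r]
    (s : Finset α) (h : s.Nonempty) : ∃ m ∈ s, ∀ x ∈ s, x = m ∨ r x m := by
  classical
  induction s using Finset.induction_on with
  | empty => simp at h
  | insert a s ha ih =>
    rcases s.eq_empty_or_nonempty with rfl | hs
    · refine ⟨a, by simp, ?_⟩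
      intro x hx
      simp only [Finset.mem_insert, Finset.notMem_empty, or_false] at hx
      exact Or.inl hx
    · obtain ⟨m, hm, hmax⟩ := ih hs
      rcases trichotomous_of r a m with hr | heq | hr
      · refine ⟨m, Finset.mem_insert_of_mem hm, ?_⟩
        intro x hx
        rcases Finset.mem_insert.mp hx with rfl | hx'
        · exact Or.inr hr
        · exact hmax x hx'
      · refine ⟨m, Finset.mem_insert_of_mem hm, ?_⟩
        intro x hx
        rcases Finset.mem_insert.mp hx with rfl | hx'
        · exact Or.inl heq
        · exact hmax x hx'
      · refine ⟨a, Finset.mem_insert_self a s, ?_⟩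
        intro x hx
        rcases Finset.mem_insert.mp hx with rfl | hx'
        · exact Or.inl rfl
        · rcases hmax x hx' with rfl | hxm
          · exact Or.inr hr
          · exact Or.inr (Trans.trans hxm hr)

end Final

end Aux

/-- For any word `β` in `I` and any `v ≤ δ(β)` in Bruhat order, there exists a
subsequence of `β` of length `ℓ(v)` whose product is `v` (a reduced subexpression);
moreover among all such subsequences there is a unique one whose index sequence is
maximal in left-to-right lexicographic order (the leftmost subexpression). -/
theorem exists_unique_leftmost_subexpression (cs : CoxeterSystem M W) [Finite W]
    (β : List B) (v : W) (hv : BruhatLE cs v (demazure cs β)) :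
    ∃! qs : List (Fin β.length),
      (List.Chain' (· < ·) qs ∧ qs.length = cs.length v ∧
        cs.wordProd (qs.map β.get) = v) ∧
      ∀ qs' : List (Fin β.length),
        (List.Chain' (· < ·) qs' ∧ qs'.length = cs.length v ∧
          cs.wordProd (qs'.map β.get) = v) →
        qs' = qs ∨ List.Lex (· < ·) qs' qs := by

  classical
  set P : List (Fin β.length) → Prop := fun qs =>
    List.Chain' (· < ·) qs ∧ qs.length = cs.length v ∧ cs.wordProd (qs.map β.get) = v
    with hP
  -- existence of at least one good index list
  obtain ⟨υ, hsub, hred, hp⟩ := exists_reduced_subword cs β v hv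
  obtain ⟨f, hf⟩ := List.sublist_iff_exists_fin_orderEmbedding_get_eq.mp hsub
  have hlenυ : υ.length = cs.length v := by
    have : cs.length (cs.wordProd υ) = υ.length := hred
    rw [hp] at this
    omega
  have hP0 : P ((List.finRange υ.length).map f) := by
    refine ⟨?_, ?_, ?_⟩
    · show List.IsChain _ _
      rw [List.isChain_iff_pairwise, List.pairwise_map]
      exact (List.pairwise_lt_finRange υ.length).imp (fun h => f.strictMono h)
    · rw [List.length_map, List.length_finRange, hlenυ]
    · rw [List.map_map]
      have : (List.finRange υ.length).map (β.get ∘ f) = (List.finRange υ.length).map υ.get := by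
        apply List.map_congr_left
        intro ix _
        exact (hf ix).symm
      rw [this, List.map_get_finRange, hp]
  -- finiteness and a lex-maximal element
  have hfin : {qs : List (Fin β.length) | P qs}.Finite :=
    (List.finite_length_eq (Fin β.length) (cs.length v)).subset (fun qs hqs => hqs.2.1)
  have hne : hfin.toFinset.Nonempty :=
    ⟨(List.finRange υ.length).map f, by rw [Set.Finite.mem_toFinset]; exact hP0⟩
  haveI : IsTrans (List (Fin β.length)) (List.Lex ((· < ·) : Fin β.length → Fin β.length → Prop)) :=
    ⟨fun _ _ _ h1 h2 => List.lex_trans lt_trans h1 h2⟩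
  obtain ⟨m, hm, hmax⟩ := finset_max_rel (List.Lex ((· < ·) : Fin β.length → Fin β.length → Prop))
    hfin.toFinset hne
  rw [Set.Finite.mem_toFinset] at hm
  have hmax' : ∀ qs', P qs' → qs' = m ∨ List.Lex (· < ·) qs' m := by
    intro qs' hqs'
    exact hmax qs' (by rw [Set.Finite.mem_toFinset]; exact hqs')
  refine ⟨m, ⟨hm, hmax'⟩, ?_⟩
  rintro y ⟨hy, hymax⟩
  rcases hmax' y hy with rfl | hlex1
  · rfl
  · rcases hymax m hm with rfl | hlex2
    · rfl
    · exfalso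
      exact irrefl_of (List.Lex ((· < ·) : Fin β.length → Fin β.length → Prop)) y
        (Trans.trans hlex1 hlex2)
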